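/- For the 2×2 matrix U(x) = [[x, x-1],[0, 1/x]], there do not exist matrices T(x) with entries in ℂ[x] and S(z) with entries in ℂ[z] such that det T and det S are nonzero constants and U(x) = T(x)·S(1/x)⁻¹ for all x ≠ 0. -/

import Mathlib

open Polynomial

lemma aux_zero (p q : Polynomial ℂ)
    (h : ∀ x : ℂ, x ≠ 0 → p.eval x = x⁻¹ * q.eval x⁻¹) : q = 0 := by
  set m := q.natDegree
  have key : (X ^ (m + 1) * p : Polynomial ℂ) = q.reverse := by
    apply Polynomial.eq_of_infinite_eval_eq
    apply Set.Infinite.mono (s := {x : ℂ | x ≠ 0})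
    · intro x hx
      have hx : x ≠ 0 := hx
      have hinv : Invertible (x⁻¹ : ℂ) := invertibleOfNonzero (inv_ne_zero hx)
      have := Polynomial.eval₂_reverse_mul_pow (RingHom.id ℂ) (x⁻¹) q
      have hiv : (⅟(x⁻¹) : ℂ) = x := by
        simp [invOf_eq_inv]
      rw [hiv] at this
      simp only [Polynomial.eval₂_eq_eval_map, Polynomial.map_id] at this
      have hq : q.eval x⁻¹ = q.reverse.eval x * (x⁻¹) ^ m := this.symm
      simp only [Set.mem_setOf_eq, eval_mul, eval_pow, eval_X, h x hx, hq]
      field_simp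
      have hxm : x ^ m * x⁻¹ ^ m = 1 := by rw [← mul_pow, mul_inv_cancel₀ hx, one_pow]
      linear_combination (x * eval x q.reverse) * hxm
    · have : ({0}ᶜ : Set ℂ) = {x : ℂ | x ≠ 0} := by ext; simp
      rw [← this]
      exact Set.Finite.infinite_compl (Set.finite_singleton 0)
  have h0 : q.leadingCoeff = 0 := by
    have := congrArg (fun r => Polynomial.eval 0 r) key
    simpa [Polynomial.coeff_zero_reverse, ← Polynomial.coeff_zero_eq_eval_zero] using this.symm
  exact Polynomial.leadingCoeff_eq_zero.mp h0

/-- Example 2 of the paper: for `U(x) = [[x, x-1],[0, 1/x]]` there is no Birkhoff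
decomposition `U(x) = T(x)·S(1/x)⁻¹` with `T`, `S` polynomial matrices whose
determinants are nonzero constants (equivalently, `U(x)·S(1/x) = T(x)` for all
`x ≠ 0`). -/
theorem stmt19 :
    ¬ ∃ T S : Matrix (Fin 2) (Fin 2) (Polynomial ℂ),
      (∃ c : ℂ, c ≠ 0 ∧ T.det = C c) ∧ (∃ c : ℂ, c ≠ 0 ∧ S.det = C c) ∧
      ∀ x : ℂ, x ≠ 0 →
        (!![x, x - 1; 0, x⁻¹] : Matrix (Fin 2) (Fin 2) ℂ) * S.map (fun p => p.eval x⁻¹) =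
          T.map (fun p => p.eval x) := by
  rintro ⟨T, S, _, ⟨c, hc, hdetS⟩, h⟩
  have h10 : ∀ x : ℂ, x ≠ 0 → (T 1 0).eval x = x⁻¹ * (S 1 0).eval x⁻¹ := by
    intro x hx
    have := congrFun (congrFun (h x hx) 1) 0
    simpa [Matrix.mul_apply, Fin.sum_univ_two, Matrix.map_apply] using this.symm
  have h11 : ∀ x : ℂ, x ≠ 0 → (T 1 1).eval x = x⁻¹ * (S 1 1).eval x⁻¹ := by
    intro x hx
    have := congrFun (congrFun (h x hx) 1) 1
    simpa [Matrix.mul_apply, Fin.sum_univ_two, Matrix.map_apply] using this.symm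
  have hS10 : S 1 0 = 0 := aux_zero _ _ h10
  have hS11 : S 1 1 = 0 := aux_zero _ _ h11
  have : S.det = 0 := by
    rw [Matrix.det_fin_two, hS10, hS11]
    ring
  rw [hdetS] at this
  exact hc (by simpa using (Polynomial.C_eq_zero.mp this))
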